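/- arXiv:2107.09218 — 2 statements merged into one kernel-verified Lean document; each statement's English description precedes it below -/
import Mathlib

section
/- Under the admissible-deformation setup, the weighted Fréchet objective satisfies the quadratic growth inequality: for every μ in the deformation class, E[s(X,x)·W₂²(μ,ν)] − E[s(X,x)·W₂²(μ_G(x),ν)] ≥ W₂²(μ, μ_G(x)), where μ_G(x) is the minimizer. -/
open MeasureTheory ProbabilityTheory Set Filter

/-- Squared 2-Wasserstein distance via couplings. -/
noncomputable def W2sq {d : ℕ} (μ ν : Measure (EuclideanSpace ℝ (Fin d))) : ℝ :=
  sInf {c : ℝ | ∃ π : Measure (EuclideanSpace ℝ (Fin d) × EuclideanSpace ℝ (Fin d)),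
    IsProbabilityMeasure π ∧ π.map Prod.fst = μ ∧ π.map Prod.snd = ν ∧
    c = ∫ x, ‖x.1 - x.2‖ ^ 2 ∂π}

/-- `T` is the gradient of a convex function on ℝ^d. -/
def IsGradientOfConvex {d : ℕ} (T : EuclideanSpace ℝ (Fin d) → EuclideanSpace ℝ (Fin d)) :
    Prop :=
  ∃ φ : EuclideanSpace ℝ (Fin d) → ℝ, ConvexOn ℝ univ φ ∧ ∀ x, HasGradientAt φ (T x) x

/-- An admissible class of deformations relative to a base measure `ν₀`. -/
structure AdmissibleClass {d : ℕ} (ν₀ : Measure (EuclideanSpace ℝ (Fin d)))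
    (𝒯 : Set (EuclideanSpace ℝ (Fin d) → EuclideanSpace ℝ (Fin d))) : Prop where
  id_mem : id ∈ 𝒯
  gradient : ∀ T ∈ 𝒯, IsGradientOfConvex T
  measurable : ∀ T ∈ 𝒯, Measurable T
  bijective : ∀ T ∈ 𝒯, Function.Bijective T
  comp_inv_mem : ∀ Ti ∈ 𝒯, ∀ Tj ∈ 𝒯, Ti ∘ Function.invFun Tj ∈ 𝒯
  convex : ∀ T₁ ∈ 𝒯, ∀ T₂ ∈ 𝒯, ∀ a : ℝ, 0 ≤ a → a ≤ 1 →
    (fun w => a • T₁ w + (1 - a) • T₂ w) ∈ 𝒯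
  compact : ∀ f : ℕ → (EuclideanSpace ℝ (Fin d) → EuclideanSpace ℝ (Fin d)),
    (∀ n, f n ∈ 𝒯) → ∃ g ∈ 𝒯, ∃ φ : ℕ → ℕ, StrictMono φ ∧
      Tendsto (fun n => ∫ w, ‖f (φ n) w - g w‖ ^ 2 ∂ν₀) atTop (nhds 0)

open Function

section Aux

set_option linter.unusedSectionVars false

variable {E' : Type*} [NormedAddCommGroup E'] [InnerProductSpace ℝ E'] [CompleteSpace E']

lemma convex_support_ineq {φ : E' → ℝ} {g : E'} {z : E'} (hφ : ConvexOn ℝ univ φ)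
    (hg : HasGradientAt φ g z) (x : E') :
    φ z + inner ℝ g (x - z) ≤ φ x := by
  set v := x - z with hv
  have hconv : ConvexOn ℝ univ (fun t : ℝ => φ (t • v + z)) := by
    have := hφ.comp_affineMap
      ((LinearMap.toSpanSingleton ℝ E' v).toAffineMap + AffineMap.const ℝ ℝ z)
    simpa [Function.comp_def] using this
  have hderiv : HasDerivAt (fun t : ℝ => φ (t • v + z)) (inner ℝ g v) 0 := by
    have hc : HasDerivAt (fun t : ℝ => t • v + z) v 0 := by
      simpa using ((hasDerivAt_id (0:ℝ)).smul_const v).add_const z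
    have hF : HasFDerivAt φ (InnerProductSpace.toDual ℝ E' g) ((0:ℝ) • v + z) := by
      simpa using hasGradientAt_iff_hasFDerivAt.1 hg
    have := hF.comp_hasDerivAt (x := (0:ℝ)) hc
    simpa [InnerProductSpace.toDual_apply_apply, Function.comp_def] using this
  have hsl := hconv.le_slope_of_hasDerivAt (x := (0:ℝ)) (y := 1) trivial trivial one_pos
    hderiv
  rw [slope_def_field] at hsl
  simp only [zero_smul, zero_add, one_smul] at hsl
  have hφx : φ (v + z) = φ x := by congr 1; rw [hv]; abel
  rw [hφx] at hsl
  nlinarith [hsl]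


lemma interp_norm_sq (u v : E') (a : ℝ) :
    ‖a • u + (1 - a) • v‖ ^ 2 =
      a * ‖u‖ ^ 2 + (1 - a) * ‖v‖ ^ 2 - a * (1 - a) * ‖u - v‖ ^ 2 := by
  have h1 : ‖a • u + (1 - a) • v‖ ^ 2
      = a ^ 2 * ‖u‖ ^ 2 + 2 * (a * (1 - a)) * inner ℝ u v + (1 - a) ^ 2 * ‖v‖ ^ 2 := by
    rw [norm_add_sq_real, norm_smul, norm_smul, real_inner_smul_left, real_inner_smul_right,
      Real.norm_eq_abs, Real.norm_eq_abs, mul_pow, mul_pow, sq_abs, sq_abs]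
    ring
  have h2 : ‖u - v‖ ^ 2 = ‖u‖ ^ 2 - 2 * inner ℝ u v + ‖v‖ ^ 2 := norm_sub_sq_real u v
  rw [h1, h2]; ring


variable {d : ℕ}
local notation "E" => EuclideanSpace ℝ (Fin d)

lemma meas_invFun {S : E → E} (hS : Measurable S) (hSb : Function.Bijective S) :
    Measurable (Function.invFun S) := by
  have hemb : MeasurableEmbedding S := hS.measurableEmbedding hSb.injective
  intro B hB
  have : Function.invFun S ⁻¹' B = S '' B := by
    ext y
    simp only [mem_preimage, mem_image]
    constructor
    · intro h
      exact ⟨invFun S y, h, Function.rightInverse_invFun hSb.surjective y⟩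
    · rintro ⟨b, hb, rfl⟩
      rwa [Function.leftInverse_invFun hSb.injective b]
  rw [this]
  exact hemb.measurableSet_image.2 hB


lemma integrable_of_aebound {ν : Measure E} [IsFiniteMeasure ν] {f : E → ℝ}
    (hf : AEStronglyMeasurable f ν) {C : ℝ} (h : ∀ᵐ w ∂ν, |f w| ≤ C) : Integrable f ν :=
  Integrable.mono' (integrable_const C) hf (by simpa [Real.norm_eq_abs] using h)

lemma integrable_of_aebound' {ν : Measure (E × E)} [IsFiniteMeasure ν] {f : E × E → ℝ}
    (hf : AEStronglyMeasurable f ν) {C : ℝ} (h : ∀ᵐ w ∂ν, |f w| ≤ C) : Integrable f ν :=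
  Integrable.mono' (integrable_const C) hf (by simpa [Real.norm_eq_abs] using h)


lemma cost_ge (M : Set E) (hMc : IsCompact M)
    (ν₀ : Measure E) [IsProbabilityMeasure ν₀] (hsupp : ν₀ Mᶜ = 0)
    (Ti Tj : E → E) (hTi : Measurable Ti) (hTibij : Bijective Ti) (hTiM : MapsTo Ti M M)
    (hTj : Measurable Tj) (hTjinj : Injective Tj) (hTjM : MapsTo Tj M M)
    (hSgrad : IsGradientOfConvex (Tj ∘ invFun Ti))
    (hSmeas : Measurable (Tj ∘ invFun Ti)) (hSbij : Bijective (Tj ∘ invFun Ti))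
    (π : Measure (E × E)) (hπ : IsProbabilityMeasure π)
    (h1 : π.map Prod.fst = ν₀.map Ti) (h2 : π.map Prod.snd = ν₀.map Tj) :
    ∫ w, ‖Ti w - Tj w‖ ^ 2 ∂ν₀ ≤ ∫ x, ‖x.1 - x.2‖ ^ 2 ∂π := by
  classical
  set S : E → E := Tj ∘ invFun Ti with hSdef
  obtain ⟨ψ, hψconv, hψgrad⟩ := hSgrad
  -- basic facts
  have hSTi : ∀ w, S (Ti w) = Tj w := by
    intro w
    simp only [hSdef, Function.comp_apply, Function.leftInverse_invFun hTibij.injective w]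
  have hψcont : Continuous ψ :=
    continuous_iff_continuousAt.2 fun x => ((hψgrad x).differentiableAt).continuousAt
  have hMmeas : MeasurableSet M := hMc.isClosed.measurableSet
  have haeM : ∀ᵐ w ∂ν₀, w ∈ M := by
    rw [ae_iff]
    exact hsupp
  -- bounds on M
  obtain ⟨R, hR⟩ : ∃ R : ℝ, ∀ x ∈ M, ‖x‖ ≤ R := hMc.isBounded.exists_norm_le
  have hMne : M.Nonempty := by
    rcases M.eq_empty_or_nonempty with h | h
    · exfalso
      have h1 : (ν₀ : Measure E) univ = 0 := by
        have : Mᶜ = univ := by simp [h]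
        rw [← this]; exact hsupp
      simp [measure_univ] at h1
    · exact h
  have hR0 : 0 ≤ R := (norm_nonneg hMne.choose).trans (hR _ hMne.choose_spec)
  obtain ⟨Cψ, hCψ⟩ : ∃ C : ℝ, ∀ x ∈ M, |ψ x| ≤ C := by
    obtain ⟨C, hC⟩ := hMc.exists_bound_of_continuousOn hψcont.continuousOn
    exact ⟨C, fun x hx => by simpa [Real.norm_eq_abs] using hC x hx⟩
  -- the dual potential
  set η : E → ℝ := fun y => inner ℝ (invFun S y) y - ψ (invFun S y) with hηdef
  have hηmeas : Measurable η := by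
    have hinv : Measurable (invFun S) := meas_invFun hSmeas hSbij
    exact (hinv.inner measurable_id).sub (hψcont.measurable.comp hinv)
  have hkey : ∀ x y : E, (inner ℝ x y : ℝ) ≤ ψ x + η y := by
    intro x y
    set z := invFun S y with hz
    have hSz : S z = y := rightInverse_invFun hSbij.surjective y
    have h := convex_support_ineq hψconv (hψgrad z) x
    rw [hSz] at h
    have hexp : (inner ℝ y (x - z) : ℝ) = inner ℝ y x - inner ℝ y z := inner_sub_right y x z
    have hxy : (inner ℝ x y : ℝ) = inner ℝ y x := real_inner_comm y x
    have hzy : (inner ℝ z y : ℝ) = inner ℝ y z := real_inner_comm y z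
    simp only [hηdef, ← hz]
    linarith [h, hexp.symm ▸ h]
  -- a.e. support facts for π
  have haefst : ∀ᵐ p : E × E ∂π, p.1 ∈ M := by
    rw [ae_iff]
    have heq : π {p : E × E | ¬ p.1 ∈ M} = (ν₀.map Ti) Mᶜ := by
      rw [← h1, Measure.map_apply measurable_fst hMmeas.compl]; rfl
    rw [heq, Measure.map_apply hTi hMmeas.compl]
    refine le_antisymm (le_trans (measure_mono fun w hw => ?_) hsupp.le) (zero_le)
    intro hwM
    exact hw (hTiM hwM)
  have hBmeas : MeasurableSet (Tj '' M) :=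
    (hTj.measurableEmbedding hTjinj).measurableSet_image.2 hMmeas
  have haesnd : ∀ᵐ p : E × E ∂π, p.2 ∈ Tj '' M := by
    rw [ae_iff]
    have : π {p : E × E | ¬ p.2 ∈ Tj '' M} = (ν₀.map Tj) (Tj '' M)ᶜ := by
      rw [← h2, Measure.map_apply measurable_snd hBmeas.compl]; rfl
    rw [this, Measure.map_apply hTj hBmeas.compl]
    refine le_antisymm (le_trans (measure_mono fun w hw => ?_) hsupp.le) (zero_le)
    intro hwM
    exact hw (mem_image_of_mem Tj hwM)
  have hBsubM : Tj '' M ⊆ M := hTjM.image_subset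
  -- bound for η on Tj '' M
  have hηbound : ∀ y ∈ Tj '' M, |η y| ≤ R * R + Cψ := by
    rintro y ⟨w, hwM, rfl⟩
    have hinvS : invFun S (Tj w) = Ti w := by
      rw [← hSTi w, Function.leftInverse_invFun hSbij.injective]
    have hTiwM : Ti w ∈ M := hTiM hwM
    have hTjwM : Tj w ∈ M := mem_image_of_mem Tj hwM |> fun h => hBsubM h
    have hip : |(inner ℝ (Ti w) (Tj w) : ℝ)| ≤ R * R :=
      le_trans (abs_real_inner_le_norm _ _)
        (mul_le_mul (hR _ hTiwM) (hR _ hTjwM) (norm_nonneg _) hR0)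
    have := hCψ _ hTiwM
    calc |η (Tj w)| = |(inner ℝ (Ti w) (Tj w) : ℝ) - ψ (Ti w)| := by rw [hηdef]; simp [hinvS]
      _ ≤ |(inner ℝ (Ti w) (Tj w) : ℝ)| + |ψ (Ti w)| := abs_sub _ _
      _ ≤ R * R + Cψ := add_le_add hip this
  have hinvS : ∀ w, invFun S (Tj w) = Ti w := by
    intro w
    rw [← hSTi w, Function.leftInverse_invFun hSbij.injective]
  have hae : ∀ᵐ p : E × E ∂π, p.1 ∈ M ∧ p.2 ∈ Tj '' M := haefst.and haesnd
  -- integrability over π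
  have hcont1 : Continuous fun p : E × E => ‖p.1‖ ^ 2 := (continuous_fst.norm).pow 2
  have hcont2 : Continuous fun p : E × E => ‖p.2‖ ^ 2 := (continuous_snd.norm).pow 2
  have hcontc : Continuous fun p : E × E => ‖p.1 - p.2‖ ^ 2 :=
    ((continuous_fst.sub continuous_snd).norm).pow 2
  have hconti : Continuous fun p : E × E => (inner ℝ p.1 p.2 : ℝ) :=
    continuous_inner.comp (continuous_fst.prodMk continuous_snd)
  have hi1 : Integrable (fun p : E × E => ‖p.1‖ ^ 2) π := by
    refine integrable_of_aebound' hcont1.aestronglyMeasurable (C := R ^ 2)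
      (hae.mono fun p hp => ?_)
    rw [abs_of_nonneg (by positivity)]
    exact pow_le_pow_left₀ (norm_nonneg _) (hR _ hp.1) 2
  have hi2 : Integrable (fun p : E × E => ‖p.2‖ ^ 2) π := by
    refine integrable_of_aebound' hcont2.aestronglyMeasurable (C := R ^ 2)
      (hae.mono fun p hp => ?_)
    rw [abs_of_nonneg (by positivity)]
    exact pow_le_pow_left₀ (norm_nonneg _) (hR _ (hBsubM hp.2)) 2
  have hic : Integrable (fun p : E × E => ‖p.1 - p.2‖ ^ 2) π := by
    refine integrable_of_aebound' hcontc.aestronglyMeasurable (C := (R + R) ^ 2)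
      (hae.mono fun p hp => ?_)
    rw [abs_of_nonneg (by positivity)]
    refine pow_le_pow_left₀ (norm_nonneg _) ?_ 2
    exact (norm_sub_le _ _).trans (add_le_add (hR _ hp.1) (hR _ (hBsubM hp.2)))
  have hii : Integrable (fun p : E × E => (inner ℝ p.1 p.2 : ℝ)) π := by
    refine integrable_of_aebound' hconti.aestronglyMeasurable (C := R * R)
      (hae.mono fun p hp => ?_)
    exact (abs_real_inner_le_norm _ _).trans
      (mul_le_mul (hR _ hp.1) (hR _ (hBsubM hp.2)) (norm_nonneg _) hR0)
  have hiψ : Integrable (fun p : E × E => ψ p.1) π := by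
    refine integrable_of_aebound' (hψcont.comp continuous_fst).aestronglyMeasurable (C := Cψ)
      (hae.mono fun p hp => hCψ _ hp.1)
  have hiη : Integrable (fun p : E × E => η p.2) π := by
    refine integrable_of_aebound' (hηmeas.comp measurable_snd).aestronglyMeasurable
      (C := R * R + Cψ) (hae.mono fun p hp => hηbound _ hp.2)
  -- integrability over ν₀
  have hgm1 : Measurable fun w => ‖Ti w‖ ^ 2 := (hTi.norm).pow_const 2
  have hgm2 : Measurable fun w => ‖Tj w‖ ^ 2 := (hTj.norm).pow_const 2
  have hgi1 : Integrable (fun w => ‖Ti w‖ ^ 2) ν₀ := by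
    refine integrable_of_aebound hgm1.aestronglyMeasurable (C := R ^ 2)
      (haeM.mono fun w hw => ?_)
    rw [abs_of_nonneg (by positivity)]
    exact pow_le_pow_left₀ (norm_nonneg _) (hR _ (hTiM hw)) 2
  have hgi2 : Integrable (fun w => ‖Tj w‖ ^ 2) ν₀ := by
    refine integrable_of_aebound hgm2.aestronglyMeasurable (C := R ^ 2)
      (haeM.mono fun w hw => ?_)
    rw [abs_of_nonneg (by positivity)]
    exact pow_le_pow_left₀ (norm_nonneg _) (hR _ (hTjM hw)) 2
  have hgi3 : Integrable (fun w => (inner ℝ (Ti w) (Tj w) : ℝ)) ν₀ := by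
    refine integrable_of_aebound (hTi.inner hTj).aestronglyMeasurable (C := R * R)
      (haeM.mono fun w hw => ?_)
    exact (abs_real_inner_le_norm _ _).trans
      (mul_le_mul (hR _ (hTiM hw)) (hR _ (hTjM hw)) (norm_nonneg _) hR0)
  have hgi4 : Integrable (fun w => ψ (Ti w)) ν₀ := by
    refine integrable_of_aebound (hψcont.measurable.comp hTi).aestronglyMeasurable (C := Cψ)
      (haeM.mono fun w hw => hCψ _ (hTiM hw))
  -- marginal identities
  have hmar1 : ∫ p : E × E, ‖p.1‖ ^ 2 ∂π = ∫ w, ‖Ti w‖ ^ 2 ∂ν₀ := by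
    have e1 : ∫ p : E × E, ‖p.1‖ ^ 2 ∂π = ∫ x, ‖x‖ ^ 2 ∂(π.map Prod.fst) :=
      (integral_map measurable_fst.aemeasurable
        ((continuous_norm.pow 2).aestronglyMeasurable)).symm
    rw [e1, h1, integral_map (f := fun x : E => ‖x‖ ^ 2) hTi.aemeasurable ((continuous_norm.pow 2).aestronglyMeasurable)]
  have hmar2 : ∫ p : E × E, ‖p.2‖ ^ 2 ∂π = ∫ w, ‖Tj w‖ ^ 2 ∂ν₀ := by
    have e1 : ∫ p : E × E, ‖p.2‖ ^ 2 ∂π = ∫ x, ‖x‖ ^ 2 ∂(π.map Prod.snd) :=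
      (integral_map measurable_snd.aemeasurable
        ((continuous_norm.pow 2).aestronglyMeasurable)).symm
    rw [e1, h2, integral_map (f := fun x : E => ‖x‖ ^ 2) hTj.aemeasurable ((continuous_norm.pow 2).aestronglyMeasurable)]
  have hmarψ : ∫ p : E × E, ψ p.1 ∂π = ∫ w, ψ (Ti w) ∂ν₀ := by
    have e1 : ∫ p : E × E, ψ p.1 ∂π = ∫ x, ψ x ∂(π.map Prod.fst) :=
      (integral_map measurable_fst.aemeasurable hψcont.aestronglyMeasurable).symm
    rw [e1, h1, integral_map hTi.aemeasurable hψcont.aestronglyMeasurable]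
  have hmarη : ∫ p : E × E, η p.2 ∂π = ∫ w, η (Tj w) ∂ν₀ := by
    have e1 : ∫ p : E × E, η p.2 ∂π = ∫ x, η x ∂(π.map Prod.snd) :=
      (integral_map measurable_snd.aemeasurable hηmeas.aestronglyMeasurable).symm
    rw [e1, h2, integral_map hTj.aemeasurable hηmeas.aestronglyMeasurable]
  have hηTj : ∀ w, η (Tj w) = (inner ℝ (Ti w) (Tj w) : ℝ) - ψ (Ti w) := by
    intro w
    rw [hηdef]
    simp [hinvS w]
  have hmarη' : ∫ p : E × E, η p.2 ∂π
      = (∫ w, (inner ℝ (Ti w) (Tj w) : ℝ) ∂ν₀) - ∫ w, ψ (Ti w) ∂ν₀ := by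
    rw [hmarη]
    simp_rw [hηTj]
    exact integral_sub hgi3 hgi4
  -- the duality estimate
  have hdual : ∫ p : E × E, (inner ℝ p.1 p.2 : ℝ) ∂π ≤ ∫ w, (inner ℝ (Ti w) (Tj w) : ℝ) ∂ν₀ := by
    have hmono : ∫ p : E × E, (inner ℝ p.1 p.2 : ℝ) ∂π
        ≤ ∫ p : E × E, (ψ p.1 + η p.2) ∂π :=
      integral_mono hii (hiψ.add hiη) fun p => hkey p.1 p.2
    rw [integral_add hiψ hiη, hmarψ, hmarη'] at hmono
    linarith
  -- expansions
  have hexpπ : ∫ p : E × E, ‖p.1 - p.2‖ ^ 2 ∂π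
      = (∫ p : E × E, ‖p.1‖ ^ 2 ∂π) - 2 * (∫ p : E × E, (inner ℝ p.1 p.2 : ℝ) ∂π)
        + ∫ p : E × E, ‖p.2‖ ^ 2 ∂π := by
    have : (fun p : E × E => ‖p.1 - p.2‖ ^ 2)
        = fun p : E × E => ‖p.1‖ ^ 2 - 2 * (inner ℝ p.1 p.2 : ℝ) + ‖p.2‖ ^ 2 := by
      funext p
      exact norm_sub_sq_real _ _
    have hA : Integrable (fun p : E × E => ‖p.1‖ ^ 2 - 2 * (inner ℝ p.1 p.2 : ℝ)) π :=
      hi1.sub (hii.const_mul 2)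
    rw [this, integral_add hA hi2, integral_sub hi1 (hii.const_mul 2), integral_const_mul]
  have hexpν : ∫ w, ‖Ti w - Tj w‖ ^ 2 ∂ν₀
      = (∫ w, ‖Ti w‖ ^ 2 ∂ν₀) - 2 * (∫ w, (inner ℝ (Ti w) (Tj w) : ℝ) ∂ν₀)
        + ∫ w, ‖Tj w‖ ^ 2 ∂ν₀ := by
    have : (fun w => ‖Ti w - Tj w‖ ^ 2)
        = fun w => ‖Ti w‖ ^ 2 - 2 * (inner ℝ (Ti w) (Tj w) : ℝ) + ‖Tj w‖ ^ 2 := by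
      funext w
      exact norm_sub_sq_real _ _
    have hA : Integrable (fun w => ‖Ti w‖ ^ 2 - 2 * (inner ℝ (Ti w) (Tj w) : ℝ)) ν₀ :=
      hgi1.sub (hgi3.const_mul 2)
    rw [this, integral_add hA hgi2, integral_sub hgi1 (hgi3.const_mul 2), integral_const_mul]
  rw [hexpπ, hexpν, hmar1, hmar2]
  linarith


lemma pair_cost_mem (M : Set E) (ν₀ : Measure E) [IsProbabilityMeasure ν₀]
    {Ti Tj : E → E} (hTi : Measurable Ti) (hTj : Measurable Tj) :
    (∫ w, ‖Ti w - Tj w‖ ^ 2 ∂ν₀) ∈ {c : ℝ | ∃ π : Measure (E × E),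
      IsProbabilityMeasure π ∧ π.map Prod.fst = ν₀.map Ti ∧ π.map Prod.snd = ν₀.map Tj ∧
      c = ∫ x, ‖x.1 - x.2‖ ^ 2 ∂π} := by
  have pair : Measurable fun w => (Ti w, Tj w) := hTi.prodMk hTj
  have hcontc : Continuous fun p : E × E => ‖p.1 - p.2‖ ^ 2 :=
    ((continuous_fst.sub continuous_snd).norm).pow 2
  refine ⟨ν₀.map fun w => (Ti w, Tj w), ?_, ?_, ?_, ?_⟩
  · exact Measure.isProbabilityMeasure_map pair.aemeasurable
  · rw [Measure.map_map measurable_fst pair]; rfl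
  · rw [Measure.map_map measurable_snd pair]; rfl
  · rw [integral_map pair.aemeasurable hcontc.aestronglyMeasurable]

lemma W2sq_bddBelow (μ ν : Measure E) : BddBelow {c : ℝ | ∃ π : Measure (E × E),
    IsProbabilityMeasure π ∧ π.map Prod.fst = μ ∧ π.map Prod.snd = ν ∧
    c = ∫ x, ‖x.1 - x.2‖ ^ 2 ∂π} := by
  refine ⟨0, ?_⟩
  rintro c ⟨π, hπ, -, -, rfl⟩
  exact integral_nonneg fun x => by positivity

lemma W2sq_eq_integral (M : Set E) (hMc : IsCompact M)
    (ν₀ : Measure E) [IsProbabilityMeasure ν₀] (hsupp : ν₀ Mᶜ = 0)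
    {Ti Tj : E → E} (hTi : Measurable Ti) (hTibij : Bijective Ti) (hTiM : MapsTo Ti M M)
    (hTj : Measurable Tj) (hTjinj : Injective Tj) (hTjM : MapsTo Tj M M)
    (hSgrad : IsGradientOfConvex (Tj ∘ invFun Ti))
    (hSmeas : Measurable (Tj ∘ invFun Ti)) (hSbij : Bijective (Tj ∘ invFun Ti)) :
    W2sq (ν₀.map Ti) (ν₀.map Tj) = ∫ w, ‖Ti w - Tj w‖ ^ 2 ∂ν₀ := by
  refine le_antisymm (csInf_le (W2sq_bddBelow _ _) (pair_cost_mem M ν₀ hTi hTj)) ?_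
  refine le_csInf ⟨_, pair_cost_mem M ν₀ hTi hTj⟩ ?_
  rintro c ⟨π, hπ, h1, h2, rfl⟩
  exact cost_ge M hMc ν₀ hsupp Ti Tj hTi hTibij hTiM hTj hTjinj hTjM hSgrad hSmeas hSbij
    π hπ h1 h2

lemma J_integrable (M : Set E) (hMc : IsCompact M)
    (ν₀ : Measure E) [IsProbabilityMeasure ν₀] (hsupp : ν₀ Mᶜ = 0)
    {Ti Tj : E → E} (hTi : Measurable Ti) (hTiM : MapsTo Ti M M)
    (hTj : Measurable Tj) (hTjM : MapsTo Tj M M) :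
    Integrable (fun w => ‖Ti w - Tj w‖ ^ 2) ν₀ := by
  have haeM : ∀ᵐ w ∂ν₀, w ∈ M := by
    rw [ae_iff]; exact hsupp
  obtain ⟨R, hR⟩ : ∃ R : ℝ, ∀ x ∈ M, ‖x‖ ≤ R := hMc.isBounded.exists_norm_le
  refine integrable_of_aebound (((hTi.sub hTj).norm).pow_const 2).aestronglyMeasurable
    (C := (R + R) ^ 2) (haeM.mono fun w hw => ?_)
  rw [abs_of_nonneg (by positivity)]
  refine pow_le_pow_left₀ (norm_nonneg _) ?_ 2
  exact (norm_sub_le _ _).trans (add_le_add (hR _ (hTiM hw)) (hR _ (hTjM hw)))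

end Aux

/-- Quadratic growth of the weighted Fréchet objective at the conditional barycenter
within an admissible deformation class: for every `μ = T₀#ν₀` in the class,
`E[s(X,x)·W₂²(μ,ν)] − E[s(X,x)·W₂²(μ_G(x),ν)] ≥ W₂²(μ, μ_G(x))`,
where `μ_G(x) = T_G#ν₀` is the minimizer. -/
theorem frechet_objective_quadratic_growth {d : ℕ} {Ω : Type*} [MeasureSpace Ω]
    [IsProbabilityMeasure (ℙ : Measure Ω)]
    (M : Set (EuclideanSpace ℝ (Fin d))) (hMc : IsCompact M) (hMconv : Convex ℝ M)
    (ν₀ : Measure (EuclideanSpace ℝ (Fin d))) [IsProbabilityMeasure ν₀]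
    (hac : ν₀ ≪ volume) (hsupp : ν₀ Mᶜ = 0)
    (𝒯 : Set (EuclideanSpace ℝ (Fin d) → EuclideanSpace ℝ (Fin d)))
    (h𝒯 : AdmissibleClass ν₀ 𝒯) (hrange : ∀ T ∈ 𝒯, MapsTo T M M)
    (T : Ω → EuclideanSpace ℝ (Fin d) → EuclideanSpace ℝ (Fin d))
    (hT : ∀ ω, T ω ∈ 𝒯)
    (s : Ω → ℝ) (hs : Integrable s ℙ) (hs1 : ∫ ω, s ω ∂(ℙ : Measure Ω) = 1)
    (hsT : ∀ w, Integrable (fun ω => s ω • T ω w) ℙ)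
    (hobj : ∀ T₀ ∈ 𝒯, Integrable
      (fun ω => s ω * W2sq (ν₀.map T₀) (ν₀.map (T ω))) ℙ)
    (TG : EuclideanSpace ℝ (Fin d) → EuclideanSpace ℝ (Fin d)) (hTG : TG ∈ 𝒯)
    (hTGmin : ∀ T₀ ∈ 𝒯,
      (∫ ω, s ω * W2sq (ν₀.map TG) (ν₀.map (T ω)) ∂(ℙ : Measure Ω)) ≤
      (∫ ω, s ω * W2sq (ν₀.map T₀) (ν₀.map (T ω)) ∂(ℙ : Measure Ω))) :
    ∀ T₀ ∈ 𝒯,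
      W2sq (ν₀.map T₀) (ν₀.map TG) ≤
        (∫ ω, s ω * W2sq (ν₀.map T₀) (ν₀.map (T ω)) ∂(ℙ : Measure Ω)) -
        (∫ ω, s ω * W2sq (ν₀.map TG) (ν₀.map (T ω)) ∂(ℙ : Measure Ω)) := by
  intro T₀ hT₀
  -- the Brenier-type identity on the class
  have hW : ∀ Ta, Ta ∈ 𝒯 → ∀ Tb, Tb ∈ 𝒯 →
      W2sq (ν₀.map Ta) (ν₀.map Tb) = ∫ w, ‖Ta w - Tb w‖ ^ 2 ∂ν₀ := by
    intro Ta ha Tb hb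
    have hS : Tb ∘ invFun Ta ∈ 𝒯 := h𝒯.comp_inv_mem Tb hb Ta ha
    exact W2sq_eq_integral M hMc ν₀ hsupp (h𝒯.measurable Ta ha) (h𝒯.bijective Ta ha)
      (hrange Ta ha) (h𝒯.measurable Tb hb) (h𝒯.bijective Tb hb).injective (hrange Tb hb)
      (h𝒯.gradient _ hS) (h𝒯.measurable _ hS) (h𝒯.bijective _ hS)
  set K : ℝ := ∫ w, ‖T₀ w - TG w‖ ^ 2 ∂ν₀ with hK
  set F₀ : ℝ := ∫ ω, s ω * W2sq (ν₀.map T₀) (ν₀.map (T ω)) ∂(ℙ : Measure Ω) with hF₀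
  set FG : ℝ := ∫ ω, s ω * W2sq (ν₀.map TG) (ν₀.map (T ω)) ∂(ℙ : Measure Ω) with hFG
  rw [hW T₀ hT₀ TG hTG, ← hK]
  -- key strong convexity estimate
  have key : ∀ a : ℝ, 0 < a → a ≤ 1 → (1 - a) * K ≤ F₀ - FG := by
    intro a ha0 ha1
    set Ta : EuclideanSpace ℝ (Fin d) → EuclideanSpace ℝ (Fin d) :=
      fun w => a • T₀ w + (1 - a) • TG w with hTadef
    have hTa : Ta ∈ 𝒯 := h𝒯.convex T₀ hT₀ TG hTG a ha0.le ha1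
    have hpt : ∀ ω w, ‖Ta w - T ω w‖ ^ 2
        = a * ‖T₀ w - T ω w‖ ^ 2 + (1 - a) * ‖TG w - T ω w‖ ^ 2
          - a * (1 - a) * ‖T₀ w - TG w‖ ^ 2 := by
      intro ω w
      have h := interp_norm_sq (T₀ w - T ω w) (TG w - T ω w) a
      have e1 : a • (T₀ w - T ω w) + (1 - a) • (TG w - T ω w) = Ta w - T ω w := by
        rw [hTadef]
        module
      have e2 : (T₀ w - T ω w) - (TG w - T ω w) = T₀ w - TG w := by abel
      rw [e1, e2] at h
      exact h
    have i1 : ∀ ω, Integrable (fun w => ‖T₀ w - T ω w‖ ^ 2) ν₀ := fun ω =>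
      J_integrable M hMc ν₀ hsupp (h𝒯.measurable T₀ hT₀) (hrange T₀ hT₀)
        (h𝒯.measurable _ (hT ω)) (hrange _ (hT ω))
    have i2 : ∀ ω, Integrable (fun w => ‖TG w - T ω w‖ ^ 2) ν₀ := fun ω =>
      J_integrable M hMc ν₀ hsupp (h𝒯.measurable TG hTG) (hrange TG hTG)
        (h𝒯.measurable _ (hT ω)) (hrange _ (hT ω))
    have i3 : Integrable (fun w => ‖T₀ w - TG w‖ ^ 2) ν₀ :=
      J_integrable M hMc ν₀ hsupp (h𝒯.measurable T₀ hT₀) (hrange T₀ hT₀)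
        (h𝒯.measurable TG hTG) (hrange TG hTG)
    have hJa : ∀ ω, (∫ w, ‖Ta w - T ω w‖ ^ 2 ∂ν₀)
        = a * (∫ w, ‖T₀ w - T ω w‖ ^ 2 ∂ν₀) + (1 - a) * (∫ w, ‖TG w - T ω w‖ ^ 2 ∂ν₀)
          - a * (1 - a) * K := by
      intro ω
      have hfe : (fun w => ‖Ta w - T ω w‖ ^ 2)
          = fun w => a * ‖T₀ w - T ω w‖ ^ 2 + ((1 - a) * ‖TG w - T ω w‖ ^ 2
            - (a * (1 - a)) * ‖T₀ w - TG w‖ ^ 2) := by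
        funext w
        rw [hpt ω w]
        ring
      have hB : Integrable (fun w => (1 - a) * ‖TG w - T ω w‖ ^ 2
          - (a * (1 - a)) * ‖T₀ w - TG w‖ ^ 2) ν₀ :=
        ((i2 ω).const_mul _).sub (i3.const_mul _)
      rw [hfe, integral_add ((i1 ω).const_mul a) hB,
        integral_sub ((i2 ω).const_mul _) (i3.const_mul _),
        integral_const_mul, integral_const_mul, integral_const_mul, hK]
      ring
    -- rewrite objectives in terms of the quadratic functional
    have hF₀' : F₀ = ∫ ω, s ω * (∫ w, ‖T₀ w - T ω w‖ ^ 2 ∂ν₀) ∂(ℙ : Measure Ω) := by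
      rw [hF₀]
      congr 1
      funext ω
      rw [hW T₀ hT₀ _ (hT ω)]
    have hFG' : FG = ∫ ω, s ω * (∫ w, ‖TG w - T ω w‖ ^ 2 ∂ν₀) ∂(ℙ : Measure Ω) := by
      rw [hFG]
      congr 1
      funext ω
      rw [hW TG hTG _ (hT ω)]
    have hobj₀ : Integrable (fun ω => s ω * (∫ w, ‖T₀ w - T ω w‖ ^ 2 ∂ν₀)) ℙ := by
      have h := hobj T₀ hT₀
      refine h.congr (Eventually.of_forall fun ω => ?_)
      simp only [hW T₀ hT₀ _ (hT ω)]
    have hobjG : Integrable (fun ω => s ω * (∫ w, ‖TG w - T ω w‖ ^ 2 ∂ν₀)) ℙ := by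
      have h := hobj TG hTG
      refine h.congr (Eventually.of_forall fun ω => ?_)
      simp only [hW TG hTG _ (hT ω)]
    have hFa : (∫ ω, s ω * W2sq (ν₀.map Ta) (ν₀.map (T ω)) ∂(ℙ : Measure Ω))
        = a * F₀ + (1 - a) * FG - a * (1 - a) * K := by
      have hfe : (fun ω => s ω * W2sq (ν₀.map Ta) (ν₀.map (T ω)))
          = fun ω => a * (s ω * (∫ w, ‖T₀ w - T ω w‖ ^ 2 ∂ν₀))
            + ((1 - a) * (s ω * (∫ w, ‖TG w - T ω w‖ ^ 2 ∂ν₀))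
              - (a * (1 - a) * K) * s ω) := by
        funext ω
        rw [hW Ta hTa _ (hT ω), hJa ω]
        ring
      have hB : Integrable (fun ω => (1 - a) * (s ω * (∫ w, ‖TG w - T ω w‖ ^ 2 ∂ν₀))
          - (a * (1 - a) * K) * s ω) ℙ :=
        (hobjG.const_mul _).sub (hs.const_mul _)
      rw [hfe, integral_add (hobj₀.const_mul a) hB,
        integral_sub (hobjG.const_mul _) (hs.const_mul _),
        integral_const_mul, integral_const_mul, integral_const_mul, hs1, hF₀', hFG']
      ring
    have hmin := hTGmin Ta hTa
    rw [hFa] at hmin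
    have h2 : a * ((1 - a) * K) ≤ a * (F₀ - FG) := by nlinarith [hmin]
    exact le_of_mul_le_mul_left h2 ha0
  -- conclude `K ≤ F₀ - FG` from `(1 - a) K ≤ F₀ - FG` for all small `a`
  have hK0 : 0 ≤ K := integral_nonneg fun w => by positivity
  have hhalf := key (1 / 2) (by norm_num) (by norm_num)
  have hD0 : 0 ≤ F₀ - FG := le_trans (by nlinarith) hhalf
  rcases eq_or_lt_of_le hK0 with hK0' | hKpos
  · linarith
  · by_contra hcon
    push_neg at hcon
    set a : ℝ := (K - (F₀ - FG)) / (2 * K) with hadef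
    have ha0 : 0 < a := div_pos (by linarith) (by linarith)
    have ha1 : a ≤ 1 := by
      rw [hadef, div_le_one (by linarith)]
      linarith
    have hk := key a ha0 ha1
    have haK : a * K = (K - (F₀ - FG)) / 2 := by
      rw [hadef]
      field_simp
    nlinarith [hk]
end

section
/- For measures μ, ν on a compact set M ⊂ ℝ^d with bounded densities f_μ, f_ν, W₂²(μ,ν) ≤ C(‖f_μ − f_ν‖_∞ + ‖f_μ − f_ν‖_∞²) for a constant C depending only on M. -/
open MeasureTheory Set

open scoped ENNReal

/-- For probability measures on a compact set `M` with bounded densities, there is a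
constant `C` depending only on `M` such that
`W₂²(μ,ν) ≤ C(‖f_μ − f_ν‖_∞ + ‖f_μ − f_ν‖_∞²)`, the sup-norm being taken over `M`. -/
theorem W2sq_le_sup_density_diff {d : ℕ}
    (M : Set (EuclideanSpace ℝ (Fin d))) (hM : IsCompact M) (hMne : M.Nonempty) :
    ∃ C > (0 : ℝ), ∀ (μ ν : Measure (EuclideanSpace ℝ (Fin d)))
      (fμ fν : EuclideanSpace ℝ (Fin d) → ℝ),
      IsProbabilityMeasure μ → IsProbabilityMeasure ν →
      μ Mᶜ = 0 → ν Mᶜ = 0 →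
      (∀ x, 0 ≤ fμ x) → (∀ x, 0 ≤ fν x) →
      (∃ B : ℝ, ∀ x ∈ M, |fμ x| ≤ B ∧ |fν x| ≤ B) →
      μ = volume.withDensity (fun x => ENNReal.ofReal (fμ x)) →
      ν = volume.withDensity (fun x => ENNReal.ofReal (fν x)) →
      W2sq μ ν ≤ C * (sSup ((fun x => |fμ x - fν x|) '' M) +
        (sSup ((fun x => |fμ x - fν x|) '' M)) ^ 2) := by
  classical
  set D : ℝ := Metric.diam M with hDdef
  have hD0 : 0 ≤ D := Metric.diam_nonneg
  have hvolM : volume M < ⊤ := IsCompact.measure_lt_top (μ := volume) hM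
  have hvol0 : 0 ≤ (volume M).toReal := ENNReal.toReal_nonneg
  refine ⟨D ^ 2 * (volume M).toReal + 1, by positivity, ?_⟩
  intro μ ν fμ fν hμp hνp hμMc hνMc hfμ0 hfν0 hB hμd hνd
  set ε : ℝ := sSup ((fun x => |fμ x - fν x|) '' M) with hεdef
  obtain ⟨B, hBb⟩ := hB
  have hbdd : BddAbove ((fun x => |fμ x - fν x|) '' M) := by
    refine ⟨2 * B, ?_⟩
    rintro y ⟨x, hx, rfl⟩
    have h1 := (hBb x hx).1
    have h2 := (hBb x hx).2
    calc |fμ x - fν x| ≤ |fμ x| + |fν x| := abs_sub _ _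
      _ ≤ 2 * B := by linarith
  have hεle : ∀ x ∈ M, |fμ x - fν x| ≤ ε := fun x hx => le_csSup hbdd ⟨x, hx, rfl⟩
  have hε0 : 0 ≤ ε := by
    obtain ⟨x, hx⟩ := hMne
    exact le_trans (abs_nonneg _) (hεle x hx)
  have hMmeas : MeasurableSet M := hM.isClosed.measurableSet
  -- the RHS is nonnegative
  have hRHS0 : 0 ≤ (D ^ 2 * (volume M).toReal + 1) * (ε + ε ^ 2) := by positivity
  -- measurable density representatives
  have hμac : μ ≪ volume := by rw [hμd]; exact withDensity_absolutelyContinuous _ _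
  have hνac : ν ≪ volume := by rw [hνd]; exact withDensity_absolutelyContinuous _ _
  set gμ : (EuclideanSpace ℝ (Fin d)) → ℝ≥0∞ := μ.rnDeriv volume with hgμdef
  set gν : (EuclideanSpace ℝ (Fin d)) → ℝ≥0∞ := ν.rnDeriv volume with hgνdef
  have hgμm : Measurable gμ := Measure.measurable_rnDeriv _ _
  have hgνm : Measurable gν := Measure.measurable_rnDeriv _ _
  have hgμ : volume.withDensity gμ = μ := Measure.withDensity_rnDeriv_eq _ _ hμac
  have hgν : volume.withDensity gν = ν := Measure.withDensity_rnDeriv_eq _ _ hνac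
  set g : (EuclideanSpace ℝ (Fin d)) → ℝ≥0∞ := fun x => min (gμ x) (gν x) with hgdef
  have hgm : Measurable g := hgμm.min hgνm
  set η : Measure (EuclideanSpace ℝ (Fin d)) := volume.withDensity g with hηdef
  set ρμ : Measure (EuclideanSpace ℝ (Fin d)) := volume.withDensity (fun x => gμ x - g x) with hρμdef
  set ρν : Measure (EuclideanSpace ℝ (Fin d)) := volume.withDensity (fun x => gν x - g x) with hρνdef
  have hμsplit : η + ρμ = μ := by
    rw [hηdef, hρμdef, ← withDensity_add_left hgm, ← hgμ]
    congr 1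
    funext x
    exact add_tsub_cancel_of_le (min_le_left _ _)
  have hνsplit : η + ρν = ν := by
    rw [hηdef, hρνdef, ← withDensity_add_left hgm, ← hgν]
    congr 1
    funext x
    exact add_tsub_cancel_of_le (min_le_right _ _)
  have hημ : η ≤ μ := by
    rw [← hgμ, hηdef]
    exact withDensity_mono (Filter.Eventually.of_forall fun x => min_le_left _ _)
  have hρμμ : ρμ ≤ μ := by
    rw [← hgμ, hρμdef]
    exact withDensity_mono (Filter.Eventually.of_forall fun x => tsub_le_self)
  have hρνν : ρν ≤ ν := by
    rw [← hgν, hρνdef]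
    exact withDensity_mono (Filter.Eventually.of_forall fun x => tsub_le_self)
  haveI : IsFiniteMeasure η :=
    ⟨lt_of_le_of_lt (le_trans (hημ univ) (le_of_eq measure_univ)) ENNReal.one_lt_top⟩
  haveI : IsFiniteMeasure ρμ :=
    ⟨lt_of_le_of_lt (le_trans (hρμμ univ) (le_of_eq measure_univ)) ENNReal.one_lt_top⟩
  haveI : IsFiniteMeasure ρν :=
    ⟨lt_of_le_of_lt (le_trans (hρνν univ) (le_of_eq measure_univ)) ENNReal.one_lt_top⟩
  set m : ℝ≥0∞ := ρμ univ with hmdef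
  have hm_top : m ≠ ⊤ := by
    refine ne_top_of_le_ne_top (by simp : (1:ℝ≥0∞) ≠ ⊤) ?_
    exact le_trans (hρμμ univ) (le_of_eq measure_univ)
  have hη_top : η univ ≠ ⊤ := measure_ne_top _ _
  have hsum1 : η univ + ρμ univ = 1 := by
    rw [← Measure.add_apply, hμsplit]; exact measure_univ
  have hsum2 : η univ + ρν univ = 1 := by
    rw [← Measure.add_apply, hνsplit]; exact measure_univ
  have hmν : ρν univ = m := by
    rw [hmdef]
    exact (ENNReal.add_right_inj hη_top).1 (hsum2.trans hsum1.symm)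
  -- the key null set
  have hnull : volume (M ∩ {x | gν x + ENNReal.ofReal ε < gμ x}) = 0 := by
    set s := M ∩ {x | gν x + ENNReal.ofReal ε < gμ x} with hsdef
    have hsm : MeasurableSet s :=
      hMmeas.inter (measurableSet_lt (hgνm.add measurable_const) hgμm)
    have hμs : ∫⁻ x in s, gμ x = μ s := by rw [← hgμ, withDensity_apply _ hsm]
    have hμs' : μ s = ∫⁻ x in s, ENNReal.ofReal (fμ x) := by
      rw [hμd, withDensity_apply _ hsm]
    have hνs : ∫⁻ x in s, gν x = ν s := by rw [← hgν, withDensity_apply _ hsm]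
    have hνs' : ν s = ∫⁻ x in s, ENNReal.ofReal (fν x) := by
      rw [hνd, withDensity_apply _ hsm]
    have hfle : ∀ᵐ x ∂(volume.restrict s),
        ENNReal.ofReal (fμ x) ≤ ENNReal.ofReal (fν x) + ENNReal.ofReal ε := by
      refine (ae_restrict_iff' hsm).2 (Filter.Eventually.of_forall fun x hx => ?_)
      have hxM : x ∈ M := hx.1
      have h1 : fμ x ≤ fν x + ε := by
        have := (abs_le.1 (hεle x hxM)).2
        linarith
      calc ENNReal.ofReal (fμ x) ≤ ENNReal.ofReal (fν x + ε) := ENNReal.ofReal_le_ofReal h1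
        _ = ENNReal.ofReal (fν x) + ENNReal.ofReal ε := ENNReal.ofReal_add (hfν0 x) hε0
    have step1 : ∫⁻ x in s, gμ x ≤ ∫⁻ x in s, (gν x + ENNReal.ofReal ε) := by
      calc ∫⁻ x in s, gμ x = ∫⁻ x in s, ENNReal.ofReal (fμ x) := by rw [hμs, hμs']
        _ ≤ ∫⁻ x in s, (ENNReal.ofReal (fν x) + ENNReal.ofReal ε) := lintegral_mono_ae hfle
        _ = (∫⁻ x in s, ENNReal.ofReal (fν x)) + ENNReal.ofReal ε * volume s := by
            rw [lintegral_add_right _ measurable_const, setLIntegral_const]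
        _ = (∫⁻ x in s, gν x) + ENNReal.ofReal ε * volume s := by rw [hνs, hνs']
        _ = ∫⁻ x in s, (gν x + ENNReal.ofReal ε) := by
            rw [lintegral_add_right _ measurable_const, setLIntegral_const]
    have hle' : (fun x => gν x + ENNReal.ofReal ε) ≤ᵐ[volume.restrict s] gμ :=
      (ae_restrict_iff' hsm).2 (Filter.Eventually.of_forall fun x hx => hx.2.le)
    have hfin : ∫⁻ x in s, (gν x + ENNReal.ofReal ε) ≠ ⊤ := by
      refine ne_top_of_le_ne_top ?_ (lintegral_mono_ae hle')
      rw [hμs]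
      exact measure_ne_top _ _
    have heq : (fun x => gν x + ENNReal.ofReal ε) =ᵐ[volume.restrict s] gμ :=
      ae_eq_of_ae_le_of_lintegral_le hle' hfin hgμm.aemeasurable step1
    have hae : ∀ᵐ x ∂(volume.restrict s), x ∉ s := by
      filter_upwards [heq] with x hx
      intro hxs
      exact absurd hx (ne_of_lt hxs.2)
    have : volume.restrict s s = 0 := by
      have := hae
      rw [Filter.Eventually, mem_ae_iff] at this
      simpa [compl_setOf] using this
    rwa [Measure.restrict_apply_self] at this
  -- mass bound : m ≤ ofReal ε * volume M
  have hρμMc : ρμ Mᶜ = 0 :=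
    le_antisymm (le_trans (hρμμ Mᶜ) (le_of_eq hμMc)) zero_le
  have hρνMc : ρν Mᶜ = 0 :=
    le_antisymm (le_trans (hρνν Mᶜ) (le_of_eq hνMc)) zero_le
  have hm_le : m ≤ ENNReal.ofReal ε * volume M := by
    have hmM : m = ρμ M := by
      have h := measure_add_measure_compl (μ := ρμ) hMmeas
      rw [hρμMc, add_zero] at h
      rw [hmdef, ← h]
    have haeM : ∀ᵐ x ∂(volume.restrict M), gμ x - g x ≤ ENNReal.ofReal ε := by
      have hbad : ∀ᵐ x ∂volume, x ∉ M ∩ {x | gν x + ENNReal.ofReal ε < gμ x} :=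
        measure_eq_zero_iff_ae_notMem.1 hnull
      refine (ae_restrict_iff' hMmeas).2 ?_
      filter_upwards [hbad] with x hx hxM
      have hle : gμ x ≤ gν x + ENNReal.ofReal ε := by
        by_contra hcon
        exact hx ⟨hxM, lt_of_not_ge hcon⟩
      rcases le_total (gμ x) (gν x) with h | h
      · rw [hgdef]; simp [min_eq_left h]
      · rw [hgdef]
        simp only [min_eq_right h]
        exact tsub_le_iff_left.2 hle
    calc m = ρμ M := hmM
      _ = ∫⁻ x in M, (gμ x - g x) := by rw [hρμdef, withDensity_apply _ hMmeas]
      _ ≤ ∫⁻ _x in M, ENNReal.ofReal ε := lintegral_mono_ae haeM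
      _ = ENNReal.ofReal ε * volume M := by rw [setLIntegral_const]
  -- the diagonal map
  set diag : (EuclideanSpace ℝ (Fin d)) → (EuclideanSpace ℝ (Fin d)) × (EuclideanSpace ℝ (Fin d)) := fun x => (x, x) with hdiagdef
  have hdiagm : Measurable diag := measurable_id.prodMk measurable_id
  -- cost function
  set f : (EuclideanSpace ℝ (Fin d)) × (EuclideanSpace ℝ (Fin d)) → ℝ := fun x => ‖x.1 - x.2‖ ^ 2 with hfdef
  have hfc : Continuous f := by
    apply Continuous.pow
    exact (continuous_fst.sub continuous_snd).norm
  have hf0 : ∀ x, 0 ≤ f x := fun x => by positivity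
  -- lower bound for the W2sq defining set
  have hSbdd : BddBelow {c : ℝ | ∃ π : Measure ((EuclideanSpace ℝ (Fin d)) × (EuclideanSpace ℝ (Fin d))),
      IsProbabilityMeasure π ∧ π.map Prod.fst = μ ∧ π.map Prod.snd = ν ∧
      c = ∫ x, ‖x.1 - x.2‖ ^ 2 ∂π} := by
    refine ⟨0, ?_⟩
    rintro c ⟨π, hπ, h1, h2, rfl⟩
    exact integral_nonneg fun x => by positivity
  -- main estimate: exhibit a coupling
  rcases eq_or_ne m 0 with hm0 | hm0
  · -- μ = ν ; diagonal coupling, cost 0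
    have hρμ0 : ρμ = 0 := Measure.measure_univ_eq_zero.1 hm0
    have hμη : μ = η := by rw [← hμsplit, hρμ0, add_zero]
    set π : Measure ((EuclideanSpace ℝ (Fin d)) × (EuclideanSpace ℝ (Fin d))) := μ.map diag with hπdef
    haveI : IsProbabilityMeasure π := by
      constructor
      rw [hπdef, Measure.map_apply hdiagm MeasurableSet.univ]
      simp
    have hfst : π.map Prod.fst = μ := by
      rw [hπdef, Measure.map_map measurable_fst hdiagm]
      have : Prod.fst ∘ diag = id := rfl
      rw [this, Measure.map_id]
    have hsnd : π.map Prod.snd = ν := by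
      rw [hπdef, Measure.map_map measurable_snd hdiagm]
      have : Prod.snd ∘ diag = id := rfl
      rw [this, Measure.map_id]
      -- μ = ν since ρν univ = m = 0
      have hρν0 : ρν = 0 := Measure.measure_univ_eq_zero.1 (hmν.trans hm0)
      rw [hμη, ← hνsplit, hρν0, add_zero]
    have hcost : ∫ x, ‖x.1 - x.2‖ ^ 2 ∂π = 0 := by
      rw [hπdef, integral_map hdiagm.aemeasurable hfc.aestronglyMeasurable]
      simp [hdiagdef, hfdef]
    have hmem : (0:ℝ) ∈ {c : ℝ | ∃ π : Measure ((EuclideanSpace ℝ (Fin d)) × (EuclideanSpace ℝ (Fin d))),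
        IsProbabilityMeasure π ∧ π.map Prod.fst = μ ∧ π.map Prod.snd = ν ∧
        c = ∫ x, ‖x.1 - x.2‖ ^ 2 ∂π} := ⟨π, inferInstance, hfst, hsnd, hcost.symm⟩
    exact le_trans (csInf_le hSbdd hmem) hRHS0
  · -- nontrivial coupling
    have hminv_top : m⁻¹ ≠ ⊤ := by simp [hm0]
    have hminv0 : m⁻¹ ≠ 0 := by simp [hm_top]
    set π : Measure ((EuclideanSpace ℝ (Fin d)) × (EuclideanSpace ℝ (Fin d))) := η.map diag + m⁻¹ • (ρμ.prod ρν) with hπdef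
    have hprod_univ : (ρμ.prod ρν) univ = m * m := by
      rw [← univ_prod_univ, Measure.prod_prod, hmν]
    have hfst : π.map Prod.fst = μ := by
      rw [hπdef, Measure.map_add _ _ measurable_fst, Measure.map_smul,
        Measure.map_map measurable_fst hdiagm]
      have h1 : Prod.fst ∘ diag = id := rfl
      rw [h1, Measure.map_id, Measure.map_fst_prod, hmν, smul_smul,
        ENNReal.inv_mul_cancel hm0 hm_top, one_smul, hμsplit]
    have hsnd : π.map Prod.snd = ν := by
      rw [hπdef, Measure.map_add _ _ measurable_snd, Measure.map_smul,
        Measure.map_map measurable_snd hdiagm]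
      have h1 : Prod.snd ∘ diag = id := rfl
      rw [h1, Measure.map_id, Measure.map_snd_prod, ← hmdef, smul_smul,
        ENNReal.inv_mul_cancel hm0 hm_top, one_smul, hνsplit]
    haveI hπprob : IsProbabilityMeasure π := by
      constructor
      rw [hπdef, Measure.add_apply, Measure.smul_apply,
        Measure.map_apply hdiagm MeasurableSet.univ, hprod_univ]
      have : diag ⁻¹' univ = univ := rfl
      rw [this, smul_eq_mul, ← mul_assoc, ENNReal.inv_mul_cancel hm0 hm_top, one_mul]
      exact hsum1
    -- integrability and cost bounds
    have hdiag_ae : ∀ᵐ x ∂(η.map diag), x.1 = x.2 := by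
      rw [Filter.Eventually, mem_ae_iff]
      have hms : MeasurableSet {x : (EuclideanSpace ℝ (Fin d)) × (EuclideanSpace ℝ (Fin d)) | x.1 = x.2} :=
        measurableSet_eq_fun measurable_fst measurable_snd
      rw [Measure.map_apply hdiagm hms.compl]
      have : diag ⁻¹' {x : (EuclideanSpace ℝ (Fin d)) × (EuclideanSpace ℝ (Fin d)) | x.1 = x.2}ᶜ = ∅ := by
        ext x; simp [hdiagdef]
      simp [this]
    have hint1 : Integrable f (η.map diag) := by
      refine (integrable_zero _ _ _).congr ?_
      filter_upwards [hdiag_ae] with x hx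
      simp [hfdef, hx]
    have hI1 : ∫ x, f x ∂(η.map diag) = 0 := by
      rw [integral_congr_ae (g := fun _ => (0:ℝ))]
      · simp
      · filter_upwards [hdiag_ae] with x hx
        simp [hfdef, hx]
    have hprod_ae : ∀ᵐ x ∂(ρμ.prod ρν), x ∈ M ×ˢ M := by
      rw [Filter.Eventually, mem_ae_iff]
      have hsub : (M ×ˢ M)ᶜ ⊆ (Mᶜ ×ˢ (univ : Set (EuclideanSpace ℝ (Fin d)))) ∪ ((univ : Set (EuclideanSpace ℝ (Fin d))) ×ˢ Mᶜ) := by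
        intro x hx
        rw [mem_compl_iff, mem_prod] at hx
        push_neg at hx
        by_cases h : x.1 ∈ M
        · exact Or.inr ⟨trivial, hx h⟩
        · exact Or.inl ⟨h, trivial⟩
      refine measure_mono_null hsub (measure_union_null ?_ ?_)
      · rw [Measure.prod_prod, hρμMc, zero_mul]
      · rw [Measure.prod_prod, hρνMc, mul_zero]
    have hbound : ∀ᵐ x ∂(ρμ.prod ρν), f x ≤ D ^ 2 := by
      filter_upwards [hprod_ae] with x hx
      have hd : dist x.1 x.2 ≤ D := Metric.dist_le_diam_of_mem hM.isBounded hx.1 hx.2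
      have : ‖x.1 - x.2‖ ≤ D := by rwa [← dist_eq_norm]
      calc f x = ‖x.1 - x.2‖ ^ 2 := rfl
        _ ≤ D ^ 2 := by nlinarith [norm_nonneg (x.1 - x.2)]
    have hint2' : Integrable f (ρμ.prod ρν) := by
      refine Integrable.mono' (integrable_const (D ^ 2)) hfc.aestronglyMeasurable ?_
      filter_upwards [hbound] with x hx
      rwa [Real.norm_of_nonneg (hf0 x)]
    have hint2 : Integrable f (m⁻¹ • (ρμ.prod ρν)) :=
      (integrable_smul_measure hminv0 hminv_top).2 hint2'
    have hI2 : ∫ x, f x ∂(ρμ.prod ρν) ≤ D ^ 2 * (m.toReal * m.toReal) := by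
      calc ∫ x, f x ∂(ρμ.prod ρν) ≤ ∫ _x, D ^ 2 ∂(ρμ.prod ρν) :=
            integral_mono_ae hint2' (integrable_const _) hbound
        _ = ((ρμ.prod ρν) univ).toReal * D ^ 2 := by rw [integral_const, smul_eq_mul]; rfl
        _ = D ^ 2 * (m.toReal * m.toReal) := by
            rw [hprod_univ, ENNReal.toReal_mul]; ring
    have hcost : ∫ x, ‖x.1 - x.2‖ ^ 2 ∂π ≤ D ^ 2 * m.toReal := by
      have hmt0 : 0 < m.toReal := ENNReal.toReal_pos hm0 hm_top
      have : ∫ x, f x ∂π = 0 + (m⁻¹).toReal * ∫ x, f x ∂(ρμ.prod ρν) := by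
        rw [hπdef, integral_add_measure hint1 hint2, hI1, integral_smul_measure, smul_eq_mul]
      rw [hfdef] at this
      rw [this, zero_add, ENNReal.toReal_inv]
      calc m.toReal⁻¹ * ∫ x, f x ∂(ρμ.prod ρν)
          ≤ m.toReal⁻¹ * (D ^ 2 * (m.toReal * m.toReal)) := by
            apply mul_le_mul_of_nonneg_left hI2 (by positivity)
        _ = D ^ 2 * m.toReal := by field_simp
    -- put everything together
    have hmem : (∫ x, ‖x.1 - x.2‖ ^ 2 ∂π) ∈ {c : ℝ | ∃ π : Measure ((EuclideanSpace ℝ (Fin d)) × (EuclideanSpace ℝ (Fin d))),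
        IsProbabilityMeasure π ∧ π.map Prod.fst = μ ∧ π.map Prod.snd = ν ∧
        c = ∫ x, ‖x.1 - x.2‖ ^ 2 ∂π} := ⟨π, hπprob, hfst, hsnd, rfl⟩
    have hW : W2sq μ ν ≤ ∫ x, ‖x.1 - x.2‖ ^ 2 ∂π := csInf_le hSbdd hmem
    have hmreal : m.toReal ≤ ε * (volume M).toReal := by
      have h1 : (ENNReal.ofReal ε * volume M).toReal = ε * (volume M).toReal := by
        rw [ENNReal.toReal_mul, ENNReal.toReal_ofReal hε0]
      have h2 : ENNReal.ofReal ε * volume M ≠ ⊤ :=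
        ENNReal.mul_ne_top ENNReal.ofReal_ne_top hvolM.ne
      calc m.toReal ≤ (ENNReal.ofReal ε * volume M).toReal := ENNReal.toReal_mono h2 hm_le
        _ = ε * (volume M).toReal := h1
    calc W2sq μ ν ≤ ∫ x, ‖x.1 - x.2‖ ^ 2 ∂π := hW
      _ ≤ D ^ 2 * m.toReal := hcost
      _ ≤ D ^ 2 * (ε * (volume M).toReal) := by
          apply mul_le_mul_of_nonneg_left hmreal (by positivity)
      _ ≤ (D ^ 2 * (volume M).toReal + 1) * (ε + ε ^ 2) := by nlinarith
end
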